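/- (Weak lower semicontinuity of the relative entropy with respect to a moving step function.) Let γ>1, T>0, and 0<v₊<v₋. Let X:(0,T)→ℝ be a function of bounded variation, let Ω := { (t,x) ∈ (0,T)×ℝ : x < X(t) }, and assume the topological boundary of Ω has zero two-dimensional Lebesgue measure. Define v̄(t,x):=v₋ for (t,x)∈Ω and v̄(t,x):=v₊ otherwise, and define V̄(t,x):=v₋ for (t,x) in the closure of Ω and V̄(t,x):=v₊ otherwise. Let Φ:(0,T)×ℝ→[0,∞) be continuous with compact support, and let C₀>0. Suppose (vᵏ) is a sequence of nonnegative Radon measures on (0,T)×ℝ with Lebesgue decompositions dvᵏ = vᵏₐ(t,x) dt dx + dvᵏₛ (vᵏₐ the density of the absolutely continuous part, vᵏₛ the singular part) satisfying, for every k, ∫∫ Φ(t,x)·Q( vᵏₐ(t,x) | v̄(t,x) ) dt dx + ∫ Φ(t,x)·p(V̄(t,x)) dvᵏₛ(t,x) ≤ C₀, and suppose vᵏ converges to a nonnegative Radon measure v∞ in the local weak-* sense, i.e. ∫ ψ dvᵏ → ∫ ψ dv∞ for every continuous compactly supported ψ:(0,T)×ℝ→ℝ. Then, writing dv∞ = vₐ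 dt dx + dvₛ for the Lebesgue decomposition of v∞, one has ∫∫ Φ(t,x)·Q( vₐ(t,x) | v̄(t,x) ) dt dx + ∫ Φ(t,x)·p(V̄(t,x)) dvₛ(t,x) ≤ C₀. -/

import Mathlib

open MeasureTheory Classical

/-- Pressure `p(v) = v^(-γ)`. -/
noncomputable def pres (γ v : ℝ) : ℝ := v ^ (-γ)

/-- `Q(v) = v^(1-γ)/(γ-1)`. -/
noncomputable def Qf (γ v : ℝ) : ℝ := v ^ (1 - γ) / (γ - 1)

/-- Relative functional `Q(v|w) = Q(v) - Q(w) - Q'(w)(v-w)` with `Q'(w) = -p(w)`. -/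
noncomputable def Qrel (γ v w : ℝ) : ℝ := Qf γ v - Qf γ w + pres γ w * (v - w)

/-- Extended-real-valued relative functional: `Q(0|w)` (and `Q(∞|w)`) is `+∞`. -/
noncomputable def QrelE (γ : ℝ) (v : ENNReal) (w : ℝ) : ENNReal :=
  if v = 0 ∨ v = ⊤ then ⊤ else ENNReal.ofReal (Qrel γ v.toReal w)

open Real
open scoped ENNReal NNReal

namespace S15


/-- Bernoulli for nonpositive exponents. -/
lemma bernoulli_neg {x σ : ℝ} (hx : 0 < x) (hσ : σ ≤ 0) : 1 + σ * (x - 1) ≤ x ^ σ := by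
  have h1 : x ^ σ = Real.exp (σ * Real.log x) := by
    rw [Real.rpow_def_of_pos hx, mul_comm]
  have h2 : 1 + σ * Real.log x ≤ Real.exp (σ * Real.log x) := by
    have := Real.add_one_le_exp (σ * Real.log x); linarith
  have h3 : Real.log x ≤ x - 1 := by
    have := Real.log_le_sub_one_of_pos hx; linarith
  have h4 : σ * (x - 1) ≤ σ * Real.log x := mul_le_mul_of_nonpos_left h3 hσ
  rw [h1]; linarith

lemma pres_pos {γ v : ℝ} (hv : 0 < v) : 0 < pres γ v := Real.rpow_pos_of_pos hv _

lemma pres_anti {γ : ℝ} (hγ : 0 < γ) {a b : ℝ} (ha : 0 < a) (hab : a < b) :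
    pres γ b < pres γ a := by
  unfold pres
  rw [Real.rpow_neg ha.le, Real.rpow_neg (ha.trans hab).le]
  exact inv_strictAnti₀ (Real.rpow_pos_of_pos ha _)
    (Real.rpow_lt_rpow ha.le hab hγ)

lemma qrel_self {γ v : ℝ} : Qrel γ v v = 0 := by unfold Qrel; ring

lemma qrel_nonneg {γ v u : ℝ} (hγ : 1 < γ) (hv : 0 < v) (hu : 0 < u) :
    0 ≤ Qrel γ v u := by
  set σ : ℝ := 1 - γ with hσdef
  have hσ : σ ≤ 0 := by linarith
  set x : ℝ := v / u with hxdef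
  have hx : 0 < x := div_pos hv hu
  have hvux : v = u * x := by rw [hxdef]; field_simp
  have hA : (0:ℝ) < u ^ σ := Real.rpow_pos_of_pos hu _
  have hB : v ^ σ = u ^ σ * x ^ σ := by
    rw [hvux, Real.mul_rpow hu.le hx.le]
  have hpres : pres γ u * (v - u) = u ^ σ * (x - 1) := by
    have h1 : pres γ u * u = u ^ σ := by
      unfold pres
      nth_rewrite 2 [← Real.rpow_one u]
      rw [← Real.rpow_add hu, hσdef]
      ring_nf
    have : v - u = u * (x - 1) := by rw [hvux]; ring
    rw [this]
    calc pres γ u * (u * (x-1)) = (pres γ u * u) * (x-1) := by ring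
      _ = u ^ σ * (x-1) := by rw [h1]
  have hbern := bernoulli_neg hx hσ
  have hγ1 : (0:ℝ) < γ - 1 := by linarith
  unfold Qrel Qf
  rw [← hσdef, hB, hpres]
  rw [div_sub_div_same]
  have key : 0 ≤ (u ^ σ * x ^ σ - u ^ σ) / (γ - 1) + u ^ σ * (x - 1) := by
    rw [← sub_nonneg] at hbern
    have h5 : 0 ≤ u ^ σ * (x ^ σ - (1 + σ * (x-1))) := by positivity
    have h6 : u ^ σ * (x ^ σ - (1 + σ * (x-1))) = (u ^ σ * x ^ σ - u ^ σ) + (γ - 1) * (u ^ σ * (x - 1)) := by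
      rw [hσdef]; ring
    rw [div_add' _ _ _ (ne_of_gt hγ1), le_div_iff₀ hγ1]
    nlinarith
  linarith [key]

/-- Intercept of the tangent line to `Q(·|w)` at the point `u`. -/
noncomputable def Itan (γ w u : ℝ) : ℝ :=
  Qf γ u + pres γ u * u - Qf γ w - pres γ w * w

lemma qrel_decomp (γ v w u : ℝ) :
    Qrel γ v w = (pres γ w - pres γ u) * v + Itan γ w u + Qrel γ v u := by
  unfold Qrel Itan; ring

/-- tangent line inequality -/
lemma tangent {γ w u v : ℝ} (hγ : 1 < γ) (hu : 0 < u) (hv : 0 < v) :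
    (pres γ w - pres γ u) * v + Itan γ w u ≤ Qrel γ v w := by
  rw [qrel_decomp γ v w u]
  have := qrel_nonneg hγ hv hu
  linarith




/-- `Itan` identity. -/
lemma itan_eq {γ w u : ℝ} (hγ : 1 < γ) (hw : 0 < w) (hu : 0 < u) :
    Itan γ w u = γ/(γ-1) * u ^ (1-γ) - γ/(γ-1) * w ^ (1-γ) := by
  have h1 : ∀ x : ℝ, 0 < x → pres γ x * x = x ^ (1-γ) := by
    intro x hx
    unfold pres
    nth_rewrite 2 [← Real.rpow_one x]
    rw [← Real.rpow_add hx]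
    ring_nf
  have hγ1 : γ - 1 ≠ 0 := by intro h; linarith [hγ]
  unfold Itan Qf
  rw [h1 u hu, h1 w hw]
  field_simp
  ring

/-- `Itan γ w ·` is unbounded above as the touch point goes to `0` through rationals. -/
lemma itan_large {γ w : ℝ} (hγ : 1 < γ) (hw : 0 < w) (M : ℝ) :
    ∃ u : ℚ, 0 < (u:ℝ) ∧ M ≤ Itan γ w (u:ℝ) := by
  have hc : (0:ℝ) < γ/(γ-1) := div_pos (by linarith) (by linarith)
  have htend : Filter.Tendsto (fun j : ℕ => (((j:ℝ)+1)) ^ (γ-1)) Filter.atTop Filter.atTop := by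
    apply (tendsto_rpow_atTop (by linarith : (0:ℝ) < γ-1)).comp
    exact Filter.tendsto_atTop_add_const_right _ _ tendsto_natCast_atTop_atTop
  obtain ⟨j, hj⟩ := (htend.eventually_ge_atTop ((M + γ/(γ-1) * w ^ (1-γ))/(γ/(γ-1)))).exists
  refine ⟨1/((j:ℚ)+1), by positivity, ?_⟩
  have hcast : ((1/((j:ℚ)+1) : ℚ) : ℝ) = (((j:ℝ)+1))⁻¹ := by push_cast; ring
  have hjpos : (0:ℝ) < (j:ℝ)+1 := by positivity
  rw [hcast, itan_eq hγ hw (by positivity)]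
  have hpow : ((((j:ℝ)+1))⁻¹) ^ (1-γ) = (((j:ℝ)+1)) ^ (γ-1) := by
    rw [← Real.rpow_neg_one ((j:ℝ)+1), ← Real.rpow_mul hjpos.le]
    congr 1; ring
  rw [hpow]
  rw [div_le_iff₀ hc] at hj
  linarith

/-- small relative entropy at nearby rational touch points -/
lemma qrel_small {γ v : ℝ} (hγ : 1 < γ) (hv : 0 < v) {δ : ℝ} (hδ : 0 < δ) :
    ∃ u : ℚ, 0 < (u:ℝ) ∧ Qrel γ v (u:ℝ) ≤ δ := by
  have hcont : ContinuousAt (fun u : ℝ => Qrel γ v u) v := by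
    unfold Qrel Qf pres
    apply ContinuousAt.add
    · apply ContinuousAt.sub continuousAt_const
      exact ((Real.continuousAt_rpow_const v (1-γ) (Or.inl hv.ne')).div_const _)
    · exact (Real.continuousAt_rpow_const v (-γ) (Or.inl hv.ne')).mul
        (continuousAt_const.sub continuousAt_id)
  rw [Metric.continuousAt_iff] at hcont
  obtain ⟨δ', hδ', hball⟩ := hcont δ hδ
  have hlt : max (v - δ'/2) (v/2) < v := by
    apply max_lt <;> [linarith; linarith]
  obtain ⟨u, hu1, hu2⟩ := exists_rat_btwn hlt
  have hu0 : 0 < (u:ℝ) := lt_of_le_of_lt (by positivity : (0:ℝ) ≤ v/2)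
    (lt_of_le_of_lt (le_max_right (v - δ'/2) (v/2)) hu1)
  refine ⟨u, hu0, ?_⟩
  have hd : dist ((u:ℝ)) v < δ' := by
    rw [Real.dist_eq, abs_lt]
    constructor
    · have := le_max_left (v - δ'/2) (v/2); linarith [hu1]
    · linarith
  have := hball hd
  rw [Real.dist_eq, qrel_self, sub_zero] at this
  exact le_of_lt (lt_of_le_of_lt (le_abs_self _) this)

/-- small pressure at large rational points -/
lemma pres_small {γ : ℝ} (hγ : 1 < γ) {δ : ℝ} (hδ : 0 < δ) :
    ∃ u : ℚ, 0 < (u:ℝ) ∧ pres γ (u:ℝ) ≤ δ := by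
  have htend : Filter.Tendsto (fun j : ℕ => (((j:ℝ)+1)) ^ (-γ)) Filter.atTop (nhds 0) := by
    apply (tendsto_rpow_neg_atTop (by linarith : (0:ℝ) < γ)).comp
    exact Filter.tendsto_atTop_add_const_right _ _ tendsto_natCast_atTop_atTop
  have hev := htend.eventually (eventually_le_nhds hδ)
  obtain ⟨j, hj⟩ := hev.exists
  exact ⟨(j:ℚ)+1, by positivity, by
    unfold pres
    push_cast
    exact hj⟩

abbrev Pair := ((ℝ×ℝ) → ℝ) × ((ℝ×ℝ) → ℝ)

structure Ctx : Type where
  γ : ℝ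
  vm : ℝ
  vp : ℝ
  Φ : (ℝ×ℝ) → ℝ
  Ω : Set (ℝ×ℝ)
  hγ : 1 < γ
  hvp : 0 < vp
  hvv : vp < vm
  hΦc : Continuous Φ
  hΦs : HasCompactSupport Φ
  hΦnn : ∀ q, 0 ≤ Φ q
  hΩne : Ω.Nonempty
  hΩcne : Ωᶜ.Nonempty

namespace Ctx
variable (c : Ctx)

noncomputable def vbar (q : ℝ×ℝ) : ℝ := if q ∈ c.Ω then c.vm else c.vp
noncomputable def Vbar (q : ℝ×ℝ) : ℝ := if q ∈ closure c.Ω then c.vm else c.vp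

lemma hvm : 0 < c.vm := c.hvp.trans c.hvv
lemma vbar_pos (q : ℝ×ℝ) : 0 < c.vbar q := by
  unfold vbar; split <;> [exact c.hvm; exact c.hvp]
lemma Vbar_pos (q : ℝ×ℝ) : 0 < c.Vbar q := by
  unfold Vbar; split <;> [exact c.hvm; exact c.hvp]

def K₀ : Set (ℝ×ℝ) := tsupport c.Φ
lemma K₀compact : IsCompact c.K₀ := c.hΦs
lemma K₀closed : IsClosed c.K₀ := isClosed_tsupport _

/-- admissible pairs -/
def Adm (P : Pair) : Prop :=
  Continuous P.1 ∧ Continuous P.2 ∧ tsupport P.1 ⊆ c.K₀ ∧ tsupport P.2 ⊆ c.K₀ ∧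
  (∀ q, P.1 q ≤ c.Φ q * pres c.γ (c.Vbar q)) ∧
  (∀ q v, 0 < v → P.1 q * v + P.2 q ≤ c.Φ q * Qrel c.γ v (c.vbar q))

lemma adm_zero : c.Adm ⟨fun _ => 0, fun _ => 0⟩ := by
  have hts : tsupport (fun _ : ℝ×ℝ => (0:ℝ)) = ∅ := by
    simp [tsupport, Function.support]
  refine ⟨continuous_const, continuous_const, ?_, ?_, fun q => ?_, fun q v hv => ?_⟩
  · show tsupport (fun _ : ℝ×ℝ => (0:ℝ)) ⊆ _
    rw [hts]; exact Set.empty_subset _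
  · show tsupport (fun _ : ℝ×ℝ => (0:ℝ)) ⊆ _
    rw [hts]; exact Set.empty_subset _
  · exact mul_nonneg (c.hΦnn q) (pres_pos (c.Vbar_pos q)).le
  · simpa using mul_nonneg (c.hΦnn q) (qrel_nonneg c.hγ hv (c.vbar_pos q))

variable {c}

lemma Adm.cs1 {P : Pair} (h : c.Adm P) : HasCompactSupport P.1 :=
  IsCompact.of_isClosed_subset c.K₀compact (isClosed_tsupport _) h.2.2.1
lemma Adm.cs2 {P : Pair} (h : c.Adm P) : HasCompactSupport P.2 :=
  IsCompact.of_isClosed_subset c.K₀compact (isClosed_tsupport _) h.2.2.2.1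

lemma Adm.zero1 {P : Pair} (h : c.Adm P) {q : ℝ×ℝ} (hq : q ∉ c.K₀) : P.1 q = 0 :=
  image_eq_zero_of_notMem_tsupport (fun hmem => hq (h.2.2.1 hmem))
lemma Adm.zero2 {P : Pair} (h : c.Adm P) {q : ℝ×ℝ} (hq : q ∉ c.K₀) : P.2 q = 0 :=
  image_eq_zero_of_notMem_tsupport (fun hmem => hq (h.2.2.2.1 hmem))

lemma Adm.bound {P : Pair} (h : c.Adm P) :
    ∃ M : ℝ, 0 ≤ M ∧ ∀ q, |P.1 q| ≤ M ∧ |P.2 q| ≤ M := by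
  obtain ⟨M₁, hM₁⟩ := h.cs1.exists_bound_of_continuous h.1
  obtain ⟨M₂, hM₂⟩ := h.cs2.exists_bound_of_continuous h.2.1
  refine ⟨max M₁ M₂ ⊔ 0, le_max_right _ _, fun q => ⟨?_, ?_⟩⟩
  · exact le_trans (hM₁ q) (le_trans (le_max_left _ _) (le_max_left _ _))
  · exact le_trans (hM₂ q) (le_trans (le_max_right _ _) (le_max_left _ _))

/-- If `Φ q = 0`, both components are nonpositive at `q`. -/
lemma Adm.nonpos_of_phi_zero {P : Pair} (h : c.Adm P) {q : ℝ×ℝ} (hq : c.Φ q = 0) :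
    P.1 q ≤ 0 ∧ P.2 q ≤ 0 := by
  have H : ∀ v : ℝ, 0 < v → P.1 q * v + P.2 q ≤ 0 := by
    intro v hv
    have := h.2.2.2.2.2 q v hv
    rwa [hq, zero_mul] at this
  constructor
  · by_contra hψ
    push_neg at hψ
    have hv : (0:ℝ) < max 1 ((1 - P.2 q) / P.1 q) := lt_max_of_lt_left one_pos
    have h2 := H _ hv
    have h3 : (1 - P.2 q) / P.1 q ≤ max 1 ((1 - P.2 q) / P.1 q) := le_max_right _ _
    have h4 : 1 - P.2 q ≤ P.1 q * max 1 ((1 - P.2 q) / P.1 q) := by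
      rw [div_le_iff₀ hψ] at h3; linarith [h3]
    linarith
  · by_contra hb
    push_neg at hb
    have hv : (0:ℝ) < P.2 q / (2 * (|P.1 q| + 1)) := by positivity
    have h2 := H _ hv
    have key : |P.1 q| * (P.2 q / (2 * (|P.1 q| + 1))) ≤ P.2 q / 2 := by
      rw [mul_comm, div_mul_eq_mul_div, div_le_div_iff₀ (by positivity) two_pos]
      nlinarith [abs_nonneg (P.1 q)]
    have h6 : -(|P.1 q| * (P.2 q / (2 * (|P.1 q| + 1)))) ≤ P.1 q * (P.2 q / (2 * (|P.1 q| + 1))) := by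
      have := neg_abs_le (P.1 q)
      nlinarith [hv.le]
    linarith

/-- mixtures of admissible pairs are admissible -/
lemma Adm.mix {P₁ P₂ : Pair} (h₁ : c.Adm P₁) (h₂ : c.Adm P₂) {χ : (ℝ×ℝ) → ℝ}
    (hχc : Continuous χ) (hχ0 : ∀ q, 0 ≤ χ q) (hχ1 : ∀ q, χ q ≤ 1) :
    c.Adm ⟨fun q => χ q * P₁.1 q + (1 - χ q) * P₂.1 q,
           fun q => χ q * P₁.2 q + (1 - χ q) * P₂.2 q⟩ := by
  have hsupp : ∀ (f g : (ℝ×ℝ) → ℝ), tsupport f ⊆ c.K₀ → tsupport g ⊆ c.K₀ →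
      tsupport (fun q => χ q * f q + (1 - χ q) * g q) ⊆ c.K₀ := by
    intro f g hf hg
    apply closure_minimal _ c.K₀closed
    intro q hq
    by_contra hqn
    have h1 : f q = 0 := image_eq_zero_of_notMem_tsupport (fun hm => hqn (hf hm))
    have h2 : g q = 0 := image_eq_zero_of_notMem_tsupport (fun hm => hqn (hg hm))
    simp [Function.mem_support, h1, h2] at hq
  refine ⟨(hχc.mul h₁.1).add ((continuous_const.sub hχc).mul h₂.1),
    (hχc.mul h₁.2.1).add ((continuous_const.sub hχc).mul h₂.2.1),
    hsupp _ _ h₁.2.2.1 h₂.2.2.1, hsupp _ _ h₁.2.2.2.1 h₂.2.2.2.1, fun q => ?_, fun q v hv => ?_⟩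
  · have a1 := h₁.2.2.2.2.1 q
    have a2 := h₂.2.2.2.2.1 q
    have b0 := hχ0 q; have b1 := hχ1 q
    simp only
    nlinarith
  · have a1 := h₁.2.2.2.2.2 q v hv
    have a2 := h₂.2.2.2.2.2 q v hv
    have b0 := hχ0 q; have b1 := hχ1 q
    simp only
    nlinarith

end Ctx


/-- helper: `ofReal` of an integral is at most the `lintegral` of `ofReal`. -/
lemma ofReal_integral_le {α : Type*} [MeasurableSpace α] {μ : Measure α} {f : α → ℝ}
    (hf : Integrable f μ) :
    ENNReal.ofReal (∫ x, f x ∂μ) ≤ ∫⁻ x, ENNReal.ofReal (f x) ∂μ := by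
  have h1 : ∫ x, f x ∂μ ≤ ∫ x, max (f x) 0 ∂μ :=
    integral_mono hf (hf.sup (integrable_zero _ _ _)) (fun x => le_max_left _ _)
  calc ENNReal.ofReal (∫ x, f x ∂μ) ≤ ENNReal.ofReal (∫ x, max (f x) 0 ∂μ) :=
        ENNReal.ofReal_le_ofReal h1
    _ = ∫⁻ x, ENNReal.ofReal (max (f x) 0) ∂μ :=
        ofReal_integral_eq_lintegral_ofReal (hf.sup (integrable_zero _ _ _))
          (Filter.Eventually.of_forall fun x => le_max_right _ _)
    _ = ∫⁻ x, ENNReal.ofReal (f x) ∂μ := by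
        congr 1; funext x
        rcases le_total (f x) 0 with h | h
        · rw [max_eq_right h, ENNReal.ofReal_zero, ENNReal.ofReal_of_nonpos h]
        · rw [max_eq_left h]


noncomputable def frd (μ : Measure (ℝ×ℝ)) (q : ℝ×ℝ) : ℝ := (μ.rnDeriv volume q).toReal

lemma integrableOn_frd (μ : Measure (ℝ×ℝ)) {K : Set (ℝ×ℝ)} (hK : IsCompact K)
    [IsFiniteMeasureOnCompacts μ] : IntegrableOn (frd μ) K volume := by
  constructor
  · exact ((Measure.measurable_rnDeriv μ volume).ennreal_toReal).aestronglyMeasurable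
  · rw [hasFiniteIntegral_iff_norm]
    calc ∫⁻ q in K, ENNReal.ofReal ‖frd μ q‖ ∂volume
        ≤ ∫⁻ q in K, μ.rnDeriv volume q ∂volume := by
          apply lintegral_mono fun q => ?_
          rw [Real.norm_of_nonneg (show (0:ℝ) ≤ frd μ q from ENNReal.toReal_nonneg)]
          exact ENNReal.ofReal_toReal_le
      _ ≤ μ K := Measure.setLIntegral_rnDeriv_le K
      _ < ⊤ := hK.measure_lt_top

namespace Ctx
variable {c : Ctx}

lemma Adm.integrable_mul_fr {P : Pair} (h : c.Adm P) (μ : Measure (ℝ×ℝ))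
    [IsFiniteMeasureOnCompacts μ] : Integrable (fun q => P.1 q * frd μ q) volume := by
  obtain ⟨M, hM0, hM⟩ := h.bound
  have heq : (fun q => P.1 q * frd μ q) = c.K₀.indicator (fun q => P.1 q * frd μ q) := by
    funext q; by_cases hq : q ∈ c.K₀
    · rw [Set.indicator_of_mem hq]
    · rw [Set.indicator_of_notMem hq, h.zero1 hq, zero_mul]
  rw [heq, integrable_indicator_iff c.K₀closed.measurableSet]
  apply Integrable.mono' ((integrableOn_frd μ c.K₀compact).const_mul M)
  · exact (h.1.measurable.mul
      ((Measure.measurable_rnDeriv μ volume).ennreal_toReal)).aestronglyMeasurable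
  · filter_upwards with q
    rw [norm_mul, Real.norm_of_nonneg (show (0:ℝ) ≤ frd μ q from ENNReal.toReal_nonneg),
      Real.norm_eq_abs]
    exact mul_le_mul_of_nonneg_right ((hM q).1) ENNReal.toReal_nonneg

lemma Adm.integrable2 {P : Pair} (h : c.Adm P) (ν : Measure (ℝ×ℝ))
    [IsFiniteMeasureOnCompacts ν] : Integrable P.2 ν :=
  h.2.1.integrable_of_hasCompactSupport h.cs2

lemma Adm.integrable1 {P : Pair} (h : c.Adm P) (ν : Measure (ℝ×ℝ))
    [IsFiniteMeasureOnCompacts ν] : Integrable P.1 ν :=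
  h.1.integrable_of_hasCompactSupport h.cs1

lemma Adm.integrable_g {P : Pair} (h : c.Adm P) (μ : Measure (ℝ×ℝ))
    [IsFiniteMeasureOnCompacts μ] :
    Integrable (fun q => P.1 q * frd μ q + P.2 q) volume :=
  (h.integrable_mul_fr μ).add (h.integrable2 volume)

instance singularPart_finiteOnCompacts (μ : Measure (ℝ×ℝ)) [IsFiniteMeasureOnCompacts μ] :
    IsFiniteMeasureOnCompacts (μ.singularPart volume) :=
  ⟨fun _K hK => lt_of_le_of_lt (Measure.le_iff'.1 (Measure.singularPart_le μ volume) _)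
    hK.measure_lt_top⟩

/-- decomposition of the integral of `ψ` against `μ`. -/
lemma Adm.integral_decomp {P : Pair} (h : c.Adm P) (μ : Measure (ℝ×ℝ))
    [IsFiniteMeasureOnCompacts μ] :
    ∫ q, P.1 q ∂μ =
      (∫ q, P.1 q * frd μ q) + ∫ q, P.1 q ∂(μ.singularPart volume) := by
  have hint : Integrable P.1 μ := h.integrable1 μ
  conv_lhs => rw [← μ.singularPart_add_rnDeriv volume]
  rw [integral_add_measure (hint.mono_measure (Measure.singularPart_le μ volume))
    (hint.mono_measure (Measure.withDensity_rnDeriv_le μ volume))]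
  have hae : μ.rnDeriv volume =ᵐ[volume]
      (fun q => ((μ.rnDeriv volume q).toNNReal : ℝ≥0∞)) :=
    (Measure.rnDeriv_lt_top μ volume).mono fun q hq => (ENNReal.coe_toNNReal hq.ne).symm
  rw [withDensity_congr_ae hae,
    integral_withDensity_eq_integral_smul₀
      ((Measure.measurable_rnDeriv μ volume).ennreal_toNNReal.aemeasurable) P.1]
  have : (fun q => (μ.rnDeriv volume q).toNNReal • P.1 q) = fun q => P.1 q * frd μ q := by
    funext q; rw [NNReal.smul_def, mul_comm]; rfl
  rw [this, add_comm]

/-- pointwise inequality against the entropy integrand. -/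
lemma Adm.pointwise_le {P : Pair} (h : c.Adm P) (q : ℝ×ℝ) (f : ℝ≥0∞) :
    ENNReal.ofReal (P.1 q * f.toReal + P.2 q) ≤
      ENNReal.ofReal (c.Φ q) * QrelE c.γ f (c.vbar q) := by
  rcases eq_or_lt_of_le (c.hΦnn q) with hΦ0 | hΦpos
  · obtain ⟨h1, h2⟩ := h.nonpos_of_phi_zero hΦ0.symm
    have hle : P.1 q * f.toReal + P.2 q ≤ 0 := by
      nlinarith [ENNReal.toReal_nonneg (a := f)]
    rw [← hΦ0, ENNReal.ofReal_zero, zero_mul, ENNReal.ofReal_of_nonpos hle]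
  · by_cases hf : f = 0 ∨ f = ⊤
    · rw [QrelE, if_pos hf, ENNReal.mul_top (ENNReal.ofReal_pos.2 hΦpos).ne']
      exact le_top
    · push_neg at hf
      rw [QrelE, if_neg (by push_neg; exact hf), ← ENNReal.ofReal_mul hΦpos.le]
      exact ENNReal.ofReal_le_ofReal
        (h.2.2.2.2.2 q _ (ENNReal.toReal_pos hf.1 hf.2))

/-- Step A: bound for a measure satisfying the entropy bound. -/
lemma Adm.value_le {P : Pair} (h : c.Adm P) (μ : Measure (ℝ×ℝ))
    [IsFiniteMeasureOnCompacts μ] {C₀ : ℝ} (hC₀ : 0 < C₀)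
    (hb : (∫⁻ q, ENNReal.ofReal (c.Φ q) * QrelE c.γ (μ.rnDeriv volume q) (c.vbar q)) +
          (∫⁻ q, ENNReal.ofReal (c.Φ q * pres c.γ (c.Vbar q)) ∂(μ.singularPart volume))
          ≤ ENNReal.ofReal C₀) :
    (∫ q, P.1 q ∂μ) + (∫ q, P.2 q) ≤ C₀ := by
  set A := ∫⁻ q, ENNReal.ofReal (c.Φ q) * QrelE c.γ (μ.rnDeriv volume q) (c.vbar q) with hA
  set B := ∫⁻ q, ENNReal.ofReal (c.Φ q * pres c.γ (c.Vbar q)) ∂(μ.singularPart volume) with hB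
  have hAt : A ≠ ⊤ := by
    intro hcon
    rw [hcon, top_add] at hb
    exact (lt_irrefl _ (lt_of_le_of_lt hb (ENNReal.ofReal_lt_top))).elim
  have hBt : B ≠ ⊤ := by
    intro hcon
    rw [hcon, add_top] at hb
    exact (lt_irrefl _ (lt_of_le_of_lt hb (ENNReal.ofReal_lt_top))).elim
  have hr1 : ENNReal.ofReal (∫ q, (P.1 q * frd μ q + P.2 q)) ≤ A := by
    refine le_trans (ofReal_integral_le (h.integrable_g μ)) ?_
    exact lintegral_mono fun q => h.pointwise_le q _
  have hr2 : ENNReal.ofReal (∫ q, P.1 q ∂(μ.singularPart volume)) ≤ B := by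
    refine le_trans (ofReal_integral_le (h.integrable1 _)) ?_
    exact lintegral_mono fun q => ENNReal.ofReal_le_ofReal (h.2.2.2.2.1 q)
  have key : ∀ (r : ℝ) (a : ℝ≥0∞), a ≠ ⊤ → ENNReal.ofReal r ≤ a → r ≤ a.toReal := by
    intro r a hat hra
    rcases le_total r 0 with hr | hr
    · exact le_trans hr ENNReal.toReal_nonneg
    · rw [← ENNReal.toReal_ofReal hr]
      exact ENNReal.toReal_mono hat hra
  have k1 := key _ _ hAt hr1
  have k2 := key _ _ hBt hr2
  have hsum : (∫ q, P.1 q ∂μ) + (∫ q, P.2 q) =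
      (∫ q, (P.1 q * frd μ q + P.2 q)) + ∫ q, P.1 q ∂(μ.singularPart volume) := by
    rw [h.integral_decomp μ, integral_add (h.integrable_mul_fr μ) (h.integrable2 volume)]
    ring
  rw [hsum]
  have hABC : A.toReal + B.toReal ≤ C₀ := by
    have := ENNReal.toReal_mono (ENNReal.ofReal_ne_top) hb
    rw [ENNReal.toReal_add hAt hBt] at this
    rwa [ENNReal.toReal_ofReal hC₀.le] at this
  linarith

end Ctx

namespace Ctx
variable (c : Ctx)

/-- cutoff vanishing on `closure Ω`, tending to `1` off it -/
noncomputable def un (n : ℕ) (q : ℝ×ℝ) : ℝ := min 1 (n * Metric.infDist q (closure c.Ω))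
/-- cutoff vanishing off `interior Ω`, tending to `1` on it -/
noncomputable def am (m : ℕ) (q : ℝ×ℝ) : ℝ := min 1 (m * Metric.infDist q ((interior c.Ω)ᶜ))

lemma un_cont (n : ℕ) : Continuous (c.un n) :=
  continuous_const.min (continuous_const.mul (Metric.continuous_infDist_pt _))
lemma am_cont (m : ℕ) : Continuous (c.am m) :=
  continuous_const.min (continuous_const.mul (Metric.continuous_infDist_pt _))

lemma un_mem (n : ℕ) (q : ℝ×ℝ) : 0 ≤ c.un n q ∧ c.un n q ≤ 1 :=
  ⟨le_min zero_le_one (mul_nonneg (Nat.cast_nonneg n) Metric.infDist_nonneg), min_le_left _ _⟩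
lemma am_mem (m : ℕ) (q : ℝ×ℝ) : 0 ≤ c.am m q ∧ c.am m q ≤ 1 :=
  ⟨le_min zero_le_one (mul_nonneg (Nat.cast_nonneg m) Metric.infDist_nonneg), min_le_left _ _⟩

lemma un_eq_zero {q : ℝ×ℝ} (hq : q ∈ closure c.Ω) (n : ℕ) : c.un n q = 0 := by
  unfold un
  rw [Metric.infDist_zero_of_mem hq, mul_zero, min_eq_right zero_le_one]

lemma am_eq_zero {q : ℝ×ℝ} (hq : q ∉ interior c.Ω) (m : ℕ) : c.am m q = 0 := by
  unfold am
  rw [Metric.infDist_zero_of_mem (Set.mem_compl hq), mul_zero, min_eq_right zero_le_one]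

lemma un_eq_one {q : ℝ×ℝ} (hq : q ∉ closure c.Ω) : ∃ n₀, ∀ n ≥ n₀, c.un n q = 1 := by
  have hne : (closure c.Ω).Nonempty := c.hΩne.closure
  have hpos : 0 < Metric.infDist q (closure c.Ω) :=
    (isClosed_closure.notMem_iff_infDist_pos hne).1 hq
  obtain ⟨n₀, hn₀⟩ := exists_nat_gt (1 / Metric.infDist q (closure c.Ω))
  refine ⟨n₀, fun n hn => ?_⟩
  unfold un
  rw [min_eq_left]
  have h1 : (1:ℝ)/Metric.infDist q (closure c.Ω) < n := lt_of_lt_of_le hn₀ (by exact_mod_cast hn)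
  rw [div_lt_iff₀ hpos] at h1
  linarith

lemma am_eq_one {q : ℝ×ℝ} (hq : q ∈ interior c.Ω) : ∃ m₀, ∀ m ≥ m₀, c.am m q = 1 := by
  have hne : ((interior c.Ω)ᶜ).Nonempty := by
    obtain ⟨x, hx⟩ := c.hΩcne
    exact ⟨x, fun hmem => hx (interior_subset hmem)⟩
  have hpos : 0 < Metric.infDist q ((interior c.Ω)ᶜ) :=
    (isOpen_interior.isClosed_compl.notMem_iff_infDist_pos hne).1 (by simpa using hq)
  obtain ⟨m₀, hm₀⟩ := exists_nat_gt (1 / Metric.infDist q ((interior c.Ω)ᶜ))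
  refine ⟨m₀, fun m hm => ?_⟩
  unfold am
  rw [min_eq_left]
  have h1 : (1:ℝ)/Metric.infDist q ((interior c.Ω)ᶜ) < m := lt_of_lt_of_le hm₀ (by exact_mod_cast hm)
  rw [div_lt_iff₀ hpos] at h1
  linarith

/-- the matched touch point for slope transfer to `vp` -/
noncomputable def u2 (u : ℝ) : ℝ :=
  (pres c.γ c.vp - pres c.γ c.vm + pres c.γ u) ^ (-(1:ℝ)/c.γ)

lemma presvv : pres c.γ c.vm < pres c.γ c.vp :=
  pres_anti (lt_trans one_pos c.hγ) c.hvp c.hvv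

lemma u2_base_pos {u : ℝ} (hu : 0 < u) :
    0 < pres c.γ c.vp - pres c.γ c.vm + pres c.γ u := by
  have := c.presvv
  have := pres_pos (γ := c.γ) hu
  linarith

lemma u2_pos {u : ℝ} (hu : 0 < u) : 0 < c.u2 u :=
  Real.rpow_pos_of_pos (c.u2_base_pos hu) _

lemma pres_u2 {u : ℝ} (hu : 0 < u) :
    pres c.γ (c.u2 u) = pres c.γ c.vp - pres c.γ c.vm + pres c.γ u := by
  have hA := c.u2_base_pos hu
  have hγ0 : c.γ ≠ 0 := ne_of_gt (lt_trans one_pos c.hγ)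
  unfold u2 pres at *
  rw [← Real.rpow_mul hA.le]
  rw [show -1/c.γ * -c.γ = 1 by field_simp, Real.rpow_one]

/-- slope function -/
noncomputable def af (u r : ℝ) (n : ℕ) (q : ℝ×ℝ) : ℝ :=
  (pres c.γ c.vm - pres c.γ u) +
    ((pres c.γ c.vp - pres c.γ r) - (pres c.γ c.vm - pres c.γ u)) * c.un n q

noncomputable def KK (u r : ℝ) : ℝ :=
  min (Itan c.γ c.vm u) (min (Itan c.γ c.vp (c.u2 u)) (Itan c.γ c.vp r))

/-- intercept function -/
noncomputable def bf (u r : ℝ) (n m : ℕ) (q : ℝ×ℝ) : ℝ :=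
  (1 - c.un n q) * (c.KK u r + (Itan c.γ c.vm u - c.KK u r) * c.am m q) +
    c.un n q * Itan c.γ c.vp r

noncomputable def mkP (u r : ℝ) (n m : ℕ) : Pair :=
  ⟨fun q => c.Φ q * c.af u r n q, fun q => c.Φ q * c.bf u r n m q⟩

lemma tsupport_phi_mul (f : (ℝ×ℝ) → ℝ) : tsupport (fun q => c.Φ q * f q) ⊆ c.K₀ := by
  apply closure_minimal _ c.K₀closed
  intro q hq
  by_contra hqn
  have h1 : c.Φ q = 0 := image_eq_zero_of_notMem_tsupport hqn
  simp [Function.mem_support, h1] at hq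

lemma adm_mk {u r : ℝ} (hu : 0 < u) (hr : 0 < r) (n m : ℕ) :
    c.Adm (c.mkP u r n m) := by
  have hγ := c.hγ
  have hγ0 : (0:ℝ) < c.γ := lt_trans one_pos hγ
  have hvm := c.hvm
  have hvp := c.hvp
  have hpu : 0 < pres c.γ u := pres_pos hu
  have hpr : 0 < pres c.γ r := pres_pos hr
  have hpvv := c.presvv
  -- the three tangent lines
  have T1 : ∀ v, 0 < v →
      (pres c.γ c.vm - pres c.γ u) * v + Itan c.γ c.vm u ≤ Qrel c.γ v c.vm :=
    fun v hv => tangent hγ hu hv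
  have T2 : ∀ v, 0 < v →
      (pres c.γ c.vm - pres c.γ u) * v + Itan c.γ c.vp (c.u2 u) ≤ Qrel c.γ v c.vp := by
    intro v hv
    have := tangent (w := c.vp) hγ (c.u2_pos hu) hv
    rwa [c.pres_u2 hu, show pres c.γ c.vp - (pres c.γ c.vp - pres c.γ c.vm + pres c.γ u)
      = pres c.γ c.vm - pres c.γ u by ring] at this
  have T3 : ∀ v, 0 < v →
      (pres c.γ c.vp - pres c.γ r) * v + Itan c.γ c.vp r ≤ Qrel c.γ v c.vp :=
    fun v hv => tangent hγ hr hv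
  have hK1 : c.KK u r ≤ Itan c.γ c.vm u := min_le_left _ _
  have hK2 : c.KK u r ≤ Itan c.γ c.vp (c.u2 u) := le_trans (min_le_right _ _) (min_le_left _ _)
  have hK3 : c.KK u r ≤ Itan c.γ c.vp r := le_trans (min_le_right _ _) (min_le_right _ _)
  refine ⟨c.hΦc.mul (by unfold af; exact (continuous_const.add (continuous_const.mul (c.un_cont n)))),
    c.hΦc.mul (by unfold bf; exact ((continuous_const.sub (c.un_cont n)).mul
      (continuous_const.add (continuous_const.mul (c.am_cont m)))).add ((c.un_cont n).mul continuous_const)),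
    c.tsupport_phi_mul _, c.tsupport_phi_mul _, fun q => ?_, fun q v hv => ?_⟩
  · -- H2 : ψ ≤ Φ pres Vbar
    show c.Φ q * c.af u r n q ≤ c.Φ q * pres c.γ (c.Vbar q)
    apply mul_le_mul_of_nonneg_left _ (c.hΦnn q)
    by_cases hq : q ∈ closure c.Ω
    · rw [Vbar, if_pos hq]
      rw [af, c.un_eq_zero hq]
      linarith
    · rw [Vbar, if_neg hq]
      obtain ⟨h0, h1⟩ := c.un_mem n q
      rw [af]
      nlinarith
  · -- H1
    show c.Φ q * c.af u r n q * v + c.Φ q * c.bf u r n m q ≤ c.Φ q * Qrel c.γ v (c.vbar q)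
    have key : c.af u r n q * v + c.bf u r n m q ≤ Qrel c.γ v (c.vbar q) := by
      by_cases hq : q ∈ c.Ω
      · rw [vbar, if_pos hq]
        rw [af, bf, c.un_eq_zero (subset_closure hq)]
        obtain ⟨ha0, ha1⟩ := c.am_mem m q
        have := T1 v hv
        nlinarith
      · rw [vbar, if_neg hq]
        rw [af, bf, c.am_eq_zero (fun hmem => hq (interior_subset hmem))]
        obtain ⟨h0, h1⟩ := c.un_mem n q
        have t2 := T2 v hv
        have t3 := T3 v hv
        nlinarith
    calc c.Φ q * c.af u r n q * v + c.Φ q * c.bf u r n m q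
        = c.Φ q * (c.af u r n q * v + c.bf u r n m q) := by ring
      _ ≤ c.Φ q * Qrel c.γ v (c.vbar q) := mul_le_mul_of_nonneg_left key (c.hΦnn q)

end Ctx

namespace Ctx
variable (c : Ctx)

/-- countable family of admissible pairs -/
noncomputable def famP (i : ℚ × ℚ × ℕ × ℕ) : Pair :=
  if h : 0 < ((i.1 : ℝ)) ∧ 0 < ((i.2.1 : ℝ)) then c.mkP (i.1:ℝ) (i.2.1:ℝ) i.2.2.1 i.2.2.2
  else ⟨fun _ => 0, fun _ => 0⟩

noncomputable def seqP (k : ℕ) : Pair :=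
  c.famP ((Denumerable.eqv (ℚ × ℚ × ℕ × ℕ)).symm k)

lemma famP_adm (i : ℚ × ℚ × ℕ × ℕ) : c.Adm (c.famP i) := by
  unfold famP
  split
  · next h => exact c.adm_mk h.1 h.2 _ _
  · exact c.adm_zero

lemma seqP_adm (k : ℕ) : c.Adm (c.seqP k) := c.famP_adm _

lemma seqP_reaches (i : ℚ × ℚ × ℕ × ℕ) : ∃ k, c.seqP k = c.famP i :=
  ⟨(Denumerable.eqv (ℚ × ℚ × ℕ × ℕ)) i, by rw [seqP, Equiv.symm_apply_apply]⟩

lemma famP_eq {u r : ℚ} (hu : 0 < (u:ℝ)) (hr : 0 < (r:ℝ)) (n m : ℕ) :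
    c.famP (u, r, n, m) = c.mkP (u:ℝ) (r:ℝ) n m := by
  unfold famP
  rw [dif_pos ⟨hu, hr⟩]

/-- Pointwise recovery of the a.c. integrand. -/
lemma pw1 {q : ℝ×ℝ} (hq : q ∉ frontier c.Ω) {f : ℝ≥0∞} (hf : f ≠ ⊤) :
    ENNReal.ofReal (c.Φ q) * QrelE c.γ f (c.vbar q) ≤
      ⨆ k, ENNReal.ofReal ((c.seqP k).1 q * f.toReal + (c.seqP k).2 q) := by
  have hγ := c.hγ
  rcases eq_or_lt_of_le (c.hΦnn q) with hΦ0 | hΦpos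
  · rw [← hΦ0, ENNReal.ofReal_zero, zero_mul]
    exact zero_le
  -- q is in the interior or outside the closure
  have hcase : q ∈ interior c.Ω ∨ q ∉ closure c.Ω := by
    by_cases h1 : q ∈ closure c.Ω
    · left
      by_contra h2
      exact hq ⟨h1, h2⟩
    · right; exact h1
  -- uniform data for the two cases:
  -- w = value of vbar at q, and for suitable indices the pair evaluates to
  -- Φ q * ((pres γ w - pres γ u) * v + Itan γ w u)  for all rationals u > 0.
  have main : ∃ w : ℝ, 0 < w ∧ c.vbar q = w ∧
      (∀ u : ℚ, 0 < (u:ℝ) → ∃ k,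
        ((c.seqP k).1 q * f.toReal + (c.seqP k).2 q) =
          c.Φ q * ((pres c.γ w - pres c.γ (u:ℝ)) * f.toReal + Itan c.γ w (u:ℝ))) := by
    rcases hcase with hin | hout
    · refine ⟨c.vm, c.hvm, by rw [vbar, if_pos (interior_subset hin)], fun u hu => ?_⟩
      obtain ⟨m₀, hm₀⟩ := c.am_eq_one hin
      obtain ⟨k, hk⟩ := c.seqP_reaches (u, 1, 0, m₀)
      refine ⟨k, ?_⟩
      rw [hk, c.famP_eq hu (by norm_num) 0 m₀]
      have hun : c.un 0 q = 0 := by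
        unfold un; simp
      have ham : c.am m₀ q = 1 := hm₀ m₀ le_rfl
      show c.Φ q * c.af _ _ _ q * f.toReal + c.Φ q * c.bf _ _ _ _ q = _
      rw [af, bf, hun, ham]
      push_cast
      ring
    · refine ⟨c.vp, c.hvp, by rw [vbar, if_neg (fun h => hout (subset_closure h))], fun r hr => ?_⟩
      obtain ⟨n₀, hn₀⟩ := c.un_eq_one hout
      obtain ⟨k, hk⟩ := c.seqP_reaches (1, r, n₀, 0)
      refine ⟨k, ?_⟩
      rw [hk, c.famP_eq (by norm_num) hr n₀ 0]
      have hun : c.un n₀ q = 1 := hn₀ n₀ le_rfl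
      show c.Φ q * c.af _ _ _ q * f.toReal + c.Φ q * c.bf _ _ _ _ q = _
      rw [af, bf, hun]
      push_cast
      ring
  obtain ⟨w, hw, hvbarw, hval⟩ := main
  rw [hvbarw]
  by_cases hf0 : f = 0
  · -- LHS is ⊤·positive; show the sup is ⊤
    rw [hf0, QrelE, if_pos (Or.inl rfl), ENNReal.mul_top (ENNReal.ofReal_pos.2 hΦpos).ne']
    rw [top_le_iff, iSup_eq_top]
    intro b hb
    obtain ⟨u, hu, hM⟩ := itan_large hγ hw ((b.toReal + 1)/c.Φ q)
    obtain ⟨k, hk⟩ := hval u hu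
    refine ⟨k, ?_⟩
    rw [hf0] at hk
    rw [hk]
    simp only [ENNReal.toReal_zero, mul_zero, zero_add]
    have h2 : b.toReal + 1 ≤ c.Φ q * Itan c.γ w (u:ℝ) := by
      rw [div_le_iff₀ hΦpos] at hM
      linarith [hM]
    calc b = ENNReal.ofReal b.toReal := (ENNReal.ofReal_toReal hb.ne).symm
      _ < ENNReal.ofReal (b.toReal + 1) := by
          rw [ENNReal.ofReal_lt_ofReal_iff (by positivity)]
          linarith
      _ ≤ ENNReal.ofReal (c.Φ q * Itan c.γ w (u:ℝ)) := ENNReal.ofReal_le_ofReal h2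
  · -- 0 < f < ⊤
    have hv : 0 < f.toReal := ENNReal.toReal_pos hf0 hf
    rw [QrelE, if_neg (by push_neg; exact ⟨hf0, hf⟩), ← ENNReal.ofReal_mul hΦpos.le]
    apply ENNReal.le_of_forall_pos_le_add
    intro ε hε _
    obtain ⟨u, hu, hsmall⟩ := qrel_small hγ hv
      (show (0:ℝ) < (ε:ℝ)/(c.Φ q) from div_pos hε hΦpos)
    obtain ⟨k, hk⟩ := hval u hu
    have hreal : c.Φ q * Qrel c.γ f.toReal w ≤
        c.Φ q * ((pres c.γ w - pres c.γ (u:ℝ)) * f.toReal + Itan c.γ w (u:ℝ)) + (ε:ℝ) := by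
      have hdec := qrel_decomp c.γ f.toReal w (u:ℝ)
      have h3 : c.Φ q * Qrel c.γ f.toReal (u:ℝ) ≤ (ε:ℝ) := by
        rw [← le_div_iff₀' hΦpos]
        exact hsmall
      nlinarith [hΦpos.le, hdec]
    calc ENNReal.ofReal (c.Φ q * Qrel c.γ f.toReal w)
        ≤ ENNReal.ofReal (c.Φ q * ((pres c.γ w - pres c.γ (u:ℝ)) * f.toReal + Itan c.γ w (u:ℝ)) + (ε:ℝ)) :=
          ENNReal.ofReal_le_ofReal hreal
      _ ≤ ENNReal.ofReal (c.Φ q * ((pres c.γ w - pres c.γ (u:ℝ)) * f.toReal + Itan c.γ w (u:ℝ))) + ENNReal.ofReal (ε:ℝ) :=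
          ENNReal.ofReal_add_le
      _ ≤ (⨆ k, ENNReal.ofReal ((c.seqP k).1 q * f.toReal + (c.seqP k).2 q)) + (ε : ℝ≥0∞) := by
          apply add_le_add
          · rw [← hk]
            exact le_iSup (fun k => ENNReal.ofReal ((c.seqP k).1 q * f.toReal + (c.seqP k).2 q)) k
          · rw [ENNReal.ofReal_coe_nnreal]

/-- Pointwise recovery of the singular integrand. -/
lemma pw2 (q : ℝ×ℝ) :
    ENNReal.ofReal (c.Φ q * pres c.γ (c.Vbar q)) ≤
      ⨆ k, ENNReal.ofReal ((c.seqP k).1 q) := by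
  have hγ := c.hγ
  rcases eq_or_lt_of_le (c.hΦnn q) with hΦ0 | hΦpos
  · rw [← hΦ0, zero_mul, ENNReal.ofReal_zero]
    exact zero_le
  have main : ∃ w : ℝ, 0 < w ∧ c.Vbar q = w ∧
      (∀ u : ℚ, 0 < (u:ℝ) → ∃ k,
        (c.seqP k).1 q = c.Φ q * (pres c.γ w - pres c.γ (u:ℝ))) := by
    by_cases hq : q ∈ closure c.Ω
    · refine ⟨c.vm, c.hvm, by rw [Vbar, if_pos hq], fun u hu => ?_⟩
      obtain ⟨k, hk⟩ := c.seqP_reaches (u, 1, 0, 0)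
      refine ⟨k, ?_⟩
      rw [hk, c.famP_eq hu (by norm_num) 0 0]
      have hun : c.un 0 q = 0 := c.un_eq_zero hq 0
      show c.Φ q * c.af _ _ _ q = _
      rw [af, hun]
      ring
    · refine ⟨c.vp, c.hvp, by rw [Vbar, if_neg hq], fun r hr => ?_⟩
      obtain ⟨n₀, hn₀⟩ := c.un_eq_one hq
      obtain ⟨k, hk⟩ := c.seqP_reaches (1, r, n₀, 0)
      refine ⟨k, ?_⟩
      rw [hk, c.famP_eq (by norm_num) hr n₀ 0]
      have hun : c.un n₀ q = 1 := hn₀ n₀ le_rfl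
      show c.Φ q * c.af _ _ _ q = _
      rw [af, hun]
      ring
  obtain ⟨w, hw, hVbarw, hval⟩ := main
  rw [hVbarw]
  apply ENNReal.le_of_forall_pos_le_add
  intro ε hε _
  obtain ⟨u, hu, hsmall⟩ := pres_small hγ
    (show (0:ℝ) < (ε:ℝ)/(c.Φ q) from div_pos hε hΦpos)
  obtain ⟨k, hk⟩ := hval u hu
  have hreal : c.Φ q * pres c.γ w ≤ c.Φ q * (pres c.γ w - pres c.γ (u:ℝ)) + (ε:ℝ) := by
    have h3 : c.Φ q * pres c.γ (u:ℝ) ≤ (ε:ℝ) := by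
      rw [← le_div_iff₀' hΦpos]
      exact hsmall
    nlinarith [hΦpos.le]
  calc ENNReal.ofReal (c.Φ q * pres c.γ w)
      ≤ ENNReal.ofReal (c.Φ q * (pres c.γ w - pres c.γ (u:ℝ)) + (ε:ℝ)) :=
        ENNReal.ofReal_le_ofReal hreal
    _ ≤ ENNReal.ofReal (c.Φ q * (pres c.γ w - pres c.γ (u:ℝ))) + ENNReal.ofReal (ε:ℝ) :=
        ENNReal.ofReal_add_le
    _ ≤ (⨆ k, ENNReal.ofReal ((c.seqP k).1 q)) + (ε : ℝ≥0∞) := by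
        apply add_le_add
        · rw [← hk]
          exact le_iSup (fun k => ENNReal.ofReal ((c.seqP k).1 q)) k
        · rw [ENNReal.ofReal_coe_nnreal]

end Ctx

lemma max_mix_le {a1 a2 χv B e : ℝ} (h0 : 0 ≤ χv) (h1 : χv ≤ 1) (hB : |a1 - a2| ≤ B)
    (he : 0 ≤ e)
    (hcases : (χv = 1 ∧ a2 ≤ a1) ∨ (χv = 0 ∧ a1 ≤ a2) ∨ B ≤ e) :
    max a1 a2 ≤ (χv * a1 + (1 - χv) * a2) + e := by
  rcases hcases with ⟨hχ, hle⟩ | ⟨hχ, hle⟩ | hBe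
  · rw [hχ, max_eq_left hle]; ring_nf; linarith
  · rw [hχ, max_eq_right hle]; ring_nf; linarith
  · rcases le_total a1 a2 with h | h
    · rw [max_eq_right h]
      rw [abs_of_nonpos (by linarith)] at hB
      nlinarith
    · rw [max_eq_left h]
      rw [abs_of_nonneg (by linarith)] at hB
      nlinarith

namespace Ctx
variable {c : Ctx}

lemma mix_lemma (μ : Measure (ℝ×ℝ)) [IsFiniteMeasureOnCompacts μ] {P₁ P₂ : Pair}
    (h₁ : c.Adm P₁) (h₂ : c.Adm P₂) {ε : ℝ} (hε : 0 < ε) :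
    ∃ P' : Pair, ∃ E Es : (ℝ×ℝ) → ℝ, c.Adm P' ∧
      (∀ q : ℝ×ℝ, 0 ≤ E q) ∧ (∀ q : ℝ×ℝ, 0 ≤ Es q) ∧
      Integrable E volume ∧ Integrable Es (μ.singularPart volume) ∧
      (∀ᵐ q ∂volume, max (P₁.1 q * frd μ q + P₁.2 q) (P₂.1 q * frd μ q + P₂.2 q)
          ≤ (P'.1 q * frd μ q + P'.2 q) + E q) ∧
      (∀ᵐ q ∂(μ.singularPart volume), max (P₁.1 q) (P₂.1 q) ≤ P'.1 q + Es q) ∧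
      (∫ q, E q) + (∫ q, Es q ∂(μ.singularPart volume)) ≤ ε := by
  haveI : IsFiniteMeasureOnCompacts (μ + volume) :=
    ⟨fun _K hK => by
      rw [Measure.add_apply]
      exact ENNReal.add_lt_top.2 ⟨hK.measure_lt_top, hK.measure_lt_top⟩⟩
  obtain ⟨M₁, hM₁0, hM₁⟩ := h₁.bound
  obtain ⟨M₂, hM₂0, hM₂⟩ := h₂.bound
  set Mb := M₁ + M₂ with hMbdef
  have hMb0 : 0 ≤ Mb := by linarith
  obtain ⟨T, hTm, hT1, hT2⟩ := Measure.mutuallySingular_singularPart μ volume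
  set g₁ := fun q => P₁.1 q * frd μ q + P₁.2 q with hg₁def
  set g₂ := fun q => P₂.1 q * frd μ q + P₂.2 q with hg₂def
  have hg₁m : Measurable g₁ :=
    (h₁.1.measurable.mul (Measure.measurable_rnDeriv μ volume).ennreal_toReal).add
      h₁.2.1.measurable
  have hg₂m : Measurable g₂ :=
    (h₂.1.measurable.mul (Measure.measurable_rnDeriv μ volume).ennreal_toReal).add
      h₂.2.1.measurable
  set EL := {q | g₂ q ≤ g₁ q} with hELdef
  set ES := {q : ℝ×ℝ | P₂.1 q ≤ P₁.1 q} with hESdef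
  have hELm : MeasurableSet EL := measurableSet_le hg₂m hg₁m
  have hESm : MeasurableSet ES := measurableSet_le h₂.1.measurable h₁.1.measurable
  set A := ((EL ∩ T) ∪ (ES ∩ Tᶜ)) ∩ c.K₀ with hAdef
  have hAm : MeasurableSet A :=
    ((hELm.inter hTm).union (hESm.inter hTm.compl)).inter c.K₀closed.measurableSet
  set ν : Measure (ℝ×ℝ) := μ + volume with hνdef
  have hνK : ν c.K₀ ≠ ⊤ := ne_of_lt c.K₀compact.measure_lt_top
  have hνA : ν A ≠ ⊤ :=
    ne_of_lt (lt_of_le_of_lt (measure_mono Set.inter_subset_right) (lt_top_iff_ne_top.2 hνK))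
  set δ : ℝ := ε / (6 * (Mb + 1)) with hδdef
  have hδ0 : 0 < δ := by positivity
  have hδne : ENNReal.ofReal δ ≠ 0 := by
    rw [Ne, ENNReal.ofReal_eq_zero]
    linarith
  obtain ⟨U, hAU, hUo, hU⟩ := A.exists_isOpen_lt_add hνA hδne
  obtain ⟨F, hFA, hFc, hF⟩ := hAm.exists_isClosed_lt_add hνA hδne
  have hFU : F ⊆ U := hFA.trans hAU
  have hνF : ν F ≠ ⊤ :=
    ne_of_lt (lt_of_le_of_lt (measure_mono hFA) (lt_top_iff_ne_top.2 hνA))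
  have hνUF : ν (U \ F) ≤ ENNReal.ofReal δ + ENNReal.ofReal δ := by
    rw [measure_diff hFU hFc.measurableSet.nullMeasurableSet hνF, tsub_le_iff_right]
    calc ν U ≤ ν A + ENNReal.ofReal δ := hU.le
      _ ≤ (ν F + ENNReal.ofReal δ) + ENNReal.ofReal δ := add_le_add hF.le le_rfl
      _ = ENNReal.ofReal δ + ENNReal.ofReal δ + ν F := by ring
  obtain ⟨χ, hχ0, hχ1, hχmem⟩ := exists_continuous_zero_one_of_isClosed
    hUo.isClosed_compl hFc (Set.disjoint_left.2 fun x hxU hxF => hxU (hFU hxF))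
  set D := c.K₀ ∩ (U \ F) with hDdef
  have hDm : MeasurableSet D :=
    c.K₀closed.measurableSet.inter (hUo.measurableSet.diff hFc.measurableSet)
  have hDsub : D ⊆ c.K₀ := Set.inter_subset_left
  have hDUF : D ⊆ U \ F := Set.inter_subset_right
  -- measure bounds for D
  have hbound_meas : ∀ (ρ : Measure (ℝ×ℝ)), ρ ≤ ν → (ρ D).toReal ≤ 2*δ := by
    intro ρ hρ
    have h1 : ρ D ≤ ENNReal.ofReal δ + ENNReal.ofReal δ :=
      le_trans (le_trans (Measure.le_iff'.1 hρ D) (measure_mono hDUF)) hνUF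
    have h2 := ENNReal.toReal_mono (by simp) h1
    rw [← ENNReal.ofReal_add hδ0.le hδ0.le, ENNReal.toReal_ofReal (by linarith)] at h2
    linarith
  refine ⟨⟨fun q => χ q * P₁.1 q + (1 - χ q) * P₂.1 q,
           fun q => χ q * P₁.2 q + (1 - χ q) * P₂.2 q⟩,
    D.indicator (fun q => Mb * (frd μ q + 1)), D.indicator (fun _ => Mb),
    h₁.mix h₂ χ.continuous (fun q => (hχmem q).1) (fun q => (hχmem q).2),
    fun q => Set.indicator_nonneg (fun q _ => by
      have := ENNReal.toReal_nonneg (a := μ.rnDeriv volume q)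
      unfold frd; nlinarith) q,
    fun q => Set.indicator_nonneg (fun q _ => hMb0) q, ?_, ?_, ?_, ?_, ?_⟩
  · -- Integrable E
    rw [integrable_indicator_iff hDm]
    apply IntegrableOn.mono_set _ hDsub
    exact (((integrableOn_frd μ c.K₀compact).add
      (integrableOn_const c.K₀compact.measure_lt_top.ne)).const_mul Mb)
  · -- Integrable Es
    rw [integrable_indicator_iff hDm]
    exact integrableOn_const (lt_of_le_of_lt (measure_mono hDsub)
      c.K₀compact.measure_lt_top).ne
  · -- a.e. bound, Lebesgue side
    have hae : ∀ᵐ q ∂volume, q ∈ T := by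
      rw [MeasureTheory.ae_iff]
      exact hT2
    filter_upwards [hae] with q hqT
    by_cases hqK : q ∈ c.K₀
    · have hmix : (χ q * P₁.1 q + (1 - χ q) * P₂.1 q) * frd μ q +
          (χ q * P₁.2 q + (1 - χ q) * P₂.2 q) = χ q * g₁ q + (1 - χ q) * g₂ q := by
        simp only [hg₁def, hg₂def]; ring
      show max (g₁ q) (g₂ q) ≤ _
      rw [hmix]
      have hBb : |g₁ q - g₂ q| ≤ Mb * (frd μ q + 1) := by
        have e1 := (hM₁ q).1
        have e2 := (hM₂ q).1
        have e3 := (hM₁ q).2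
        have e4 := (hM₂ q).2
        have hfr : 0 ≤ frd μ q := ENNReal.toReal_nonneg
        have : g₁ q - g₂ q = (P₁.1 q - P₂.1 q) * frd μ q + (P₁.2 q - P₂.2 q) := by
          simp only [hg₁def, hg₂def]; ring
        rw [this]
        have h5 : |(P₁.1 q - P₂.1 q) * frd μ q + (P₁.2 q - P₂.2 q)| ≤
            |P₁.1 q - P₂.1 q| * frd μ q + |P₁.2 q - P₂.2 q| := by
          calc _ ≤ |(P₁.1 q - P₂.1 q) * frd μ q| + |P₁.2 q - P₂.2 q| := abs_add_le _ _
            _ = |P₁.1 q - P₂.1 q| * frd μ q + |P₁.2 q - P₂.2 q| := by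
                rw [abs_mul, abs_of_nonneg hfr]
        have h6 : |P₁.1 q - P₂.1 q| ≤ Mb := by
          calc |P₁.1 q - P₂.1 q| ≤ |P₁.1 q| + |P₂.1 q| := abs_sub _ _
            _ ≤ Mb := by rw [hMbdef]; linarith
        have h7 : |P₁.2 q - P₂.2 q| ≤ Mb := by
          calc |P₁.2 q - P₂.2 q| ≤ |P₁.2 q| + |P₂.2 q| := abs_sub _ _
            _ ≤ Mb := by rw [hMbdef]; linarith
        nlinarith
      apply max_mix_le (hχmem q).1 (hχmem q).2 hBb
        (Set.indicator_nonneg (fun q _ => by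
          have := ENNReal.toReal_nonneg (a := μ.rnDeriv volume q)
          unfold frd; nlinarith) q)
      by_cases hqF : q ∈ F
      · left
        refine ⟨by simpa using hχ1 hqF, ?_⟩
        have hqA : q ∈ A := hFA hqF
        rcases hqA.1 with hin | hin
        · exact hin.1
        · exact absurd hin.2 (by simpa using hqT)
      · by_cases hqU : q ∈ U
        · right; right
          rw [Set.indicator_of_mem (show q ∈ D from ⟨hqK, hqU, hqF⟩)]
        · right; left
          refine ⟨by simpa using hχ0 (Set.mem_compl hqU), ?_⟩
          have hqnA : q ∉ A := fun hqA => hqU (hAU hqA)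
          by_contra hlt
          push_neg at hlt
          exact hqnA ⟨Or.inl ⟨le_of_lt hlt, hqT⟩, hqK⟩
    · -- off the support everything vanishes
      show max (g₁ q) (g₂ q) ≤ _
      have z1 := h₁.zero1 hqK; have z2 := h₁.zero2 hqK
      have z3 := h₂.zero1 hqK; have z4 := h₂.zero2 hqK
      have hg1 : g₁ q = 0 := by simp only [hg₁def]; rw [z1, z2]; ring
      have hg2 : g₂ q = 0 := by simp only [hg₂def]; rw [z3, z4]; ring
      rw [hg1, hg2, z1, z2, z3, z4]
      have : (0:ℝ) ≤ D.indicator (fun q => Mb * (frd μ q + 1)) q :=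
        Set.indicator_nonneg (fun q _ => by
          have := ENNReal.toReal_nonneg (a := μ.rnDeriv volume q)
          unfold frd; nlinarith) q
      simp only [max_self, mul_zero, zero_mul, add_zero, zero_add]
      nlinarith
  · -- a.e. bound, singular side
    have hae : ∀ᵐ q ∂(μ.singularPart volume), q ∈ Tᶜ := by
      rw [MeasureTheory.ae_iff]
      simpa using hT1
    filter_upwards [hae] with q hqT
    by_cases hqK : q ∈ c.K₀
    · have hind : 0 ≤ D.indicator (fun _ : ℝ×ℝ => Mb) q :=
        Set.indicator_nonneg (fun q _ => hMb0) q
      have hBb : |P₁.1 q - P₂.1 q| ≤ Mb := by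
        calc |P₁.1 q - P₂.1 q| ≤ |P₁.1 q| + |P₂.1 q| := abs_sub _ _
          _ ≤ Mb := by rw [hMbdef]; linarith [(hM₁ q).1, (hM₂ q).1]
      show max (P₁.1 q) (P₂.1 q) ≤ (χ q * P₁.1 q + (1 - χ q) * P₂.1 q) + _
      apply max_mix_le (hχmem q).1 (hχmem q).2 hBb hind
      by_cases hqF : q ∈ F
      · left
        refine ⟨by simpa using hχ1 hqF, ?_⟩
        have hqA : q ∈ A := hFA hqF
        rcases hqA.1 with hin | hin
        · exact absurd hin.2 (by simpa using hqT)
        · exact hin.1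
      · by_cases hqU : q ∈ U
        · right; right
          rw [Set.indicator_of_mem (show q ∈ D from ⟨hqK, hqU, hqF⟩)]
        · right; left
          refine ⟨by simpa using hχ0 (Set.mem_compl hqU), ?_⟩
          have hqnA : q ∉ A := fun hqA => hqU (hAU hqA)
          by_contra hlt
          push_neg at hlt
          exact hqnA ⟨Or.inr ⟨le_of_lt hlt, hqT⟩, hqK⟩
    · show max (P₁.1 q) (P₂.1 q) ≤ _
      have z1 := h₁.zero1 hqK
      have z3 := h₂.zero1 hqK
      rw [z1, z3]
      have hind : 0 ≤ D.indicator (fun _ : ℝ×ℝ => Mb) q :=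
        Set.indicator_nonneg (fun q _ => hMb0) q
      simp only [max_self, mul_zero, zero_mul, add_zero, zero_add]
      nlinarith
  · -- total error bound
    have hintfr : IntegrableOn (frd μ) D volume :=
      (integrableOn_frd μ c.K₀compact).mono_set hDsub
    have hEint : ∫ q, D.indicator (fun q => Mb * (frd μ q + 1)) q =
        Mb * ((∫ q in D, frd μ q) + (volume D).toReal) := by
      rw [integral_indicator hDm]
      rw [show (fun q => Mb * (frd μ q + 1)) = fun q => Mb * frd μ q + Mb by funext q; ring]
      rw [integral_add (hintfr.const_mul Mb) (integrableOn_const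
        (lt_of_le_of_lt (measure_mono hDsub) c.K₀compact.measure_lt_top).ne)]
      rw [integral_const_mul, setIntegral_const]
      simp [smul_eq_mul, measureReal_def]
      ring
    have hEsint : ∫ q, D.indicator (fun _ : ℝ×ℝ => Mb) q ∂(μ.singularPart volume) =
        ((μ.singularPart volume) D).toReal * Mb := by
      rw [integral_indicator hDm, setIntegral_const, smul_eq_mul, measureReal_def]
    have hfrD : ∫ q in D, frd μ q ≤ (μ D).toReal := by
      have h1 : ∫ q in D, frd μ q = (∫⁻ q in D, μ.rnDeriv volume q).toReal := by
        apply integral_toReal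
        · exact (Measure.measurable_rnDeriv μ volume).aemeasurable.restrict
        · exact ae_restrict_of_ae (Measure.rnDeriv_lt_top μ volume)
      rw [h1]
      apply ENNReal.toReal_mono
      · exact ne_of_lt (lt_of_le_of_lt (le_trans (measure_mono hDsub)
          (le_refl _)) c.K₀compact.measure_lt_top)
      · exact Measure.setLIntegral_rnDeriv_le D
    have hb1 : (μ D).toReal ≤ 2*δ := hbound_meas μ (Measure.le_add_right le_rfl)
    have hb2 : (volume D).toReal ≤ 2*δ := hbound_meas volume (Measure.le_add_left le_rfl)
    have hb3 : ((μ.singularPart volume) D).toReal ≤ 2*δ :=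
      hbound_meas _ (le_trans (Measure.singularPart_le μ volume) (Measure.le_add_right le_rfl))
    rw [hEint, hEsint]
    have hδε : 6 * (Mb+1) * δ = ε := by
      rw [hδdef]; field_simp
    nlinarith [hfrD, hb1, hb2, hb3, hMb0, hδ0]
end Ctx

lemma real_le_of_forall_pos_le_add {a b : ℝ} (h : ∀ ε : ℝ, 0 < ε → a ≤ b + ε) : a ≤ b := by
  by_contra hab
  push_neg at hab
  have := h ((a - b)/2) (by linarith)
  linarith

lemma integrable_max {α : Type*} [MeasurableSpace α] {μ : Measure α} {f g : α → ℝ}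
    (hf : Integrable f μ) (hg : Integrable g μ) :
    Integrable (fun x => max (f x) (g x)) μ := by
  exact (hf.sup hg).congr (Filter.Eventually.of_forall fun x => rfl)

lemma ofReal_max (a b : ℝ) :
    ENNReal.ofReal (max a b) = max (ENNReal.ofReal a) (ENNReal.ofReal b) := by
  rcases le_total a b with h | h
  · rw [max_eq_right h, max_eq_right (ENNReal.ofReal_le_ofReal h)]
  · rw [max_eq_left h, max_eq_left (ENNReal.ofReal_le_ofReal h)]

namespace Ctx

/-- running maxima of the sequence of admissible pairs, a.c. part -/
noncomputable def GA (c : Ctx) (μ : Measure (ℝ×ℝ)) : ℕ → (ℝ×ℝ) → ℝ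
  | 0 => fun _ => 0
  | (N+1) => fun q => max ((c.seqP N).1 q * frd μ q + (c.seqP N).2 q) (GA c μ N q)

/-- running maxima, singular part -/
noncomputable def PA (c : Ctx) : ℕ → (ℝ×ℝ) → ℝ
  | 0 => fun _ => 0
  | (N+1) => fun q => max ((c.seqP N).1 q) (PA c N q)

variable {c : Ctx}

lemma GA_nonneg (μ : Measure (ℝ×ℝ)) (N : ℕ) (q : ℝ×ℝ) : 0 ≤ GA c μ N q := by
  induction N with
  | zero => exact le_refl 0
  | succ n ih => exact le_trans ih (le_max_right _ _)

lemma PA_nonneg (N : ℕ) (q : ℝ×ℝ) : 0 ≤ PA c N q := by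
  induction N with
  | zero => exact le_refl 0
  | succ n ih => exact le_trans ih (le_max_right _ _)

lemma GA_mono (μ : Measure (ℝ×ℝ)) {N M : ℕ} (h : N ≤ M) (q : ℝ×ℝ) :
    GA c μ N q ≤ GA c μ M q := by
  induction M with
  | zero => rw [Nat.le_zero.1 h]
  | succ n ih =>
    rcases Nat.le_succ_iff.1 h with h' | h'
    · exact le_trans (ih h') (le_max_right _ _)
    · rw [h']
lemma PA_mono {N M : ℕ} (h : N ≤ M) (q : ℝ×ℝ) : PA c N q ≤ PA c M q := by
  induction M with
  | zero => rw [Nat.le_zero.1 h]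
  | succ n ih =>
    rcases Nat.le_succ_iff.1 h with h' | h'
    · exact le_trans (ih h') (le_max_right _ _)
    · rw [h']

lemma GA_meas (μ : Measure (ℝ×ℝ)) (N : ℕ) : Measurable (GA c μ N) := by
  induction N with
  | zero => exact measurable_const
  | succ n ih =>
    exact (((c.seqP_adm n).1.measurable.mul
      (Measure.measurable_rnDeriv μ volume).ennreal_toReal).add
      (c.seqP_adm n).2.1.measurable).max ih

lemma PA_meas (N : ℕ) : Measurable (PA c N) := by
  induction N with
  | zero => exact measurable_const
  | succ n ih => exact (c.seqP_adm n).1.measurable.max ih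

lemma GA_int (μ : Measure (ℝ×ℝ)) [IsFiniteMeasureOnCompacts μ] (N : ℕ) :
    Integrable (GA c μ N) volume := by
  induction N with
  | zero => exact integrable_zero _ _ _
  | succ n ih => exact integrable_max ((c.seqP_adm n).integrable_g μ) ih

lemma PA_int (ν : Measure (ℝ×ℝ)) [IsFiniteMeasureOnCompacts ν] (N : ℕ) :
    Integrable (PA c N) ν := by
  induction N with
  | zero => exact integrable_zero _ _ _
  | succ n ih => exact integrable_max ((c.seqP_adm n).integrable1 ν) ih

lemma max_add_le {a b e x : ℝ} (he : 0 ≤ e) (h : a ≤ b + e) :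
    max a x ≤ max b x + e := by
  apply max_le
  · exact le_trans h (add_le_add (le_max_left _ _) le_rfl)
  · exact le_trans (le_max_right b x) (le_add_of_nonneg_right he)

/-- accumulator induction -/
lemma accum (μ : Measure (ℝ×ℝ)) [IsFiniteMeasureOnCompacts μ] {C₀ : ℝ}
    (hstepA : ∀ P : Pair, c.Adm P → (∫ q, P.1 q ∂μ) + (∫ q, P.2 q) ≤ C₀) :
    ∀ (N : ℕ) (P : Pair), c.Adm P → ∀ ε : ℝ, 0 < ε →
    (∫ q, max (P.1 q * frd μ q + P.2 q) (GA c μ N q)) +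
      (∫ q, max (P.1 q) (PA c N q) ∂(μ.singularPart volume)) ≤ C₀ + ε := by
  intro N
  induction N with
  | zero =>
    intro P hP ε hε
    obtain ⟨P', E, Es, hP', hE0, hEs0, hEi, hEsi, hae1, hae2, herr⟩ :=
      mix_lemma μ hP c.adm_zero (half_pos hε)
    have hae1' : ∀ᵐ q ∂volume,
        max (P.1 q * frd μ q + P.2 q) (GA c μ 0 q) ≤ (P'.1 q * frd μ q + P'.2 q) + E q := by
      filter_upwards [hae1] with q hq
      simpa [GA] using hq
    have hae2' : ∀ᵐ q ∂(μ.singularPart volume),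
        max (P.1 q) (PA c 0 q) ≤ P'.1 q + Es q := by
      filter_upwards [hae2] with q hq
      simpa [PA] using hq
    have hint1 : Integrable (fun q => max (P.1 q * frd μ q + P.2 q) (GA c μ 0 q)) volume :=
      integrable_max (hP.integrable_g μ) (GA_int μ 0)
    have hint2 : Integrable (fun q => max (P.1 q) (PA c 0 q)) (μ.singularPart volume) :=
      integrable_max (hP.integrable1 _) (PA_int _ 0)
    have h1 : (∫ q, max (P.1 q * frd μ q + P.2 q) (GA c μ 0 q)) ≤
        (∫ q, ((P'.1 q * frd μ q + P'.2 q) + E q)) :=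
      integral_mono_ae hint1 ((hP'.integrable_g μ).add hEi) hae1'
    have h2 : (∫ q, max (P.1 q) (PA c 0 q) ∂(μ.singularPart volume)) ≤
        (∫ q, (P'.1 q + Es q) ∂(μ.singularPart volume)) :=
      integral_mono_ae hint2 ((hP'.integrable1 _).add hEsi) hae2'
    rw [integral_add (hP'.integrable_g μ) hEi] at h1
    rw [integral_add (hP'.integrable1 _) hEsi] at h2
    have hval : (∫ q, (P'.1 q * frd μ q + P'.2 q)) +
        (∫ q, P'.1 q ∂(μ.singularPart volume)) ≤ C₀ := by
      have hd := hP'.integral_decomp μ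
      have hv := hstepA P' hP'
      rw [hd] at hv
      rw [integral_add (hP'.integrable_mul_fr μ) (hP'.integrable2 volume)]
      linarith
    linarith
  | succ n ih =>
    intro P hP ε hε
    obtain ⟨P', E, Es, hP', hE0, hEs0, hEi, hEsi, hae1, hae2, herr⟩ :=
      mix_lemma μ hP (c.seqP_adm n) (half_pos hε)
    have hae1' : ∀ᵐ q ∂volume,
        max (P.1 q * frd μ q + P.2 q) (GA c μ (n+1) q) ≤
          max (P'.1 q * frd μ q + P'.2 q) (GA c μ n q) + E q := by
      filter_upwards [hae1] with q hq
      show max _ (max _ _) ≤ _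
      rw [← max_assoc]
      exact max_add_le (hE0 q) hq
    have hae2' : ∀ᵐ q ∂(μ.singularPart volume),
        max (P.1 q) (PA c (n+1) q) ≤ max (P'.1 q) (PA c n q) + Es q := by
      filter_upwards [hae2] with q hq
      show max _ (max _ _) ≤ _
      rw [← max_assoc]
      exact max_add_le (hEs0 q) hq
    have hint1 : Integrable (fun q => max (P.1 q * frd μ q + P.2 q) (GA c μ (n+1) q)) volume :=
      integrable_max (hP.integrable_g μ) (GA_int μ (n+1))
    have hint2 : Integrable (fun q => max (P.1 q) (PA c (n+1) q)) (μ.singularPart volume) :=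
      integrable_max (hP.integrable1 _) (PA_int _ (n+1))
    have h1 : (∫ q, max (P.1 q * frd μ q + P.2 q) (GA c μ (n+1) q)) ≤
        (∫ q, (max (P'.1 q * frd μ q + P'.2 q) (GA c μ n q) + E q)) :=
      integral_mono_ae hint1
        ((integrable_max (hP'.integrable_g μ) (GA_int μ n)).add hEi) hae1'
    have h2 : (∫ q, max (P.1 q) (PA c (n+1) q) ∂(μ.singularPart volume)) ≤
        (∫ q, (max (P'.1 q) (PA c n q) + Es q) ∂(μ.singularPart volume)) :=
      integral_mono_ae hint2
        ((integrable_max (hP'.integrable1 _) (PA_int _ n)).add hEsi) hae2'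
    rw [integral_add (integrable_max (hP'.integrable_g μ) (GA_int μ n)) hEi] at h1
    rw [integral_add (integrable_max (hP'.integrable1 _) (PA_int _ n)) hEsi] at h2
    have hih := ih P' hP' (ε/2) (half_pos hε)
    linarith

/-- the running maxima satisfy the bound -/
lemma GA_bound (μ : Measure (ℝ×ℝ)) [IsFiniteMeasureOnCompacts μ] {C₀ : ℝ} (hC₀ : 0 < C₀)
    (hstepA : ∀ P : Pair, c.Adm P → (∫ q, P.1 q ∂μ) + (∫ q, P.2 q) ≤ C₀) (N : ℕ) :
    (∫ q, GA c μ N q) + (∫ q, PA c N q ∂(μ.singularPart volume)) ≤ C₀ := by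
  cases N with
  | zero =>
    simp only [GA, PA, integral_zero]
    linarith
  | succ n =>
    apply real_le_of_forall_pos_le_add
    intro ε hε
    exact accum μ hstepA n (c.seqP n) (c.seqP_adm n) ε hε

lemma sup_GA (μ : Measure (ℝ×ℝ)) (q : ℝ×ℝ) :
    (⨆ k, ENNReal.ofReal ((c.seqP k).1 q * frd μ q + (c.seqP k).2 q)) =
      ⨆ N, ENNReal.ofReal (GA c μ N q) := by
  apply le_antisymm
  · apply iSup_le; intro k
    refine le_trans ?_ (le_iSup (fun N => ENNReal.ofReal (GA c μ N q)) (k+1))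
    exact ENNReal.ofReal_le_ofReal (le_max_left _ _)
  · apply iSup_le; intro N
    induction N with
    | zero => simp [GA]
    | succ n ih =>
      show ENNReal.ofReal (max _ _) ≤ _
      rw [ofReal_max]
      exact max_le (le_iSup (fun k => ENNReal.ofReal ((c.seqP k).1 q * frd μ q + (c.seqP k).2 q)) n) ih

lemma sup_PA (q : ℝ×ℝ) :
    (⨆ k, ENNReal.ofReal ((c.seqP k).1 q)) = ⨆ N, ENNReal.ofReal (PA c N q) := by
  apply le_antisymm
  · apply iSup_le; intro k
    refine le_trans ?_ (le_iSup (fun N => ENNReal.ofReal (PA c N q)) (k+1))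
    exact ENNReal.ofReal_le_ofReal (le_max_left _ _)
  · apply iSup_le; intro N
    induction N with
    | zero => simp [PA]
    | succ n ih =>
      show ENNReal.ofReal (max _ _) ≤ _
      rw [ofReal_max]
      exact max_le (le_iSup (fun k => ENNReal.ofReal ((c.seqP k).1 q)) n) ih

/-- the main abstract bound -/
lemma main_bound (μ : Measure (ℝ×ℝ)) [IsFiniteMeasureOnCompacts μ] {C₀ : ℝ} (hC₀ : 0 < C₀)
    (hfr : volume (frontier c.Ω) = 0)
    (hstepA : ∀ P : Pair, c.Adm P → (∫ q, P.1 q ∂μ) + (∫ q, P.2 q) ≤ C₀) :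
    (∫⁻ q, ENNReal.ofReal (c.Φ q) * QrelE c.γ (μ.rnDeriv volume q) (c.vbar q)) +
      (∫⁻ q, ENNReal.ofReal (c.Φ q * pres c.γ (c.Vbar q)) ∂(μ.singularPart volume))
      ≤ ENNReal.ofReal C₀ := by
  have hfr_ae : ∀ᵐ q : ℝ×ℝ ∂volume, q ∉ frontier c.Ω := by
    rw [MeasureTheory.ae_iff]
    simpa using hfr
  have hrn := Measure.rnDeriv_lt_top μ volume
  have h1 : (∫⁻ q, ENNReal.ofReal (c.Φ q) * QrelE c.γ (μ.rnDeriv volume q) (c.vbar q)) ≤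
      ⨆ N, ∫⁻ q, ENNReal.ofReal (GA c μ N q) := by
    calc (∫⁻ q, ENNReal.ofReal (c.Φ q) * QrelE c.γ (μ.rnDeriv volume q) (c.vbar q))
        ≤ ∫⁻ q, ⨆ N, ENNReal.ofReal (GA c μ N q) := by
          apply lintegral_mono_ae
          filter_upwards [hfr_ae, hrn] with q hq1 hq2
          rw [← c.sup_GA μ q]
          exact c.pw1 hq1 hq2.ne
      _ = ⨆ N, ∫⁻ q, ENNReal.ofReal (GA c μ N q) :=
          lintegral_iSup (fun N => (GA_meas μ N).ennreal_ofReal)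
            (fun i j hij q => ENNReal.ofReal_le_ofReal (GA_mono μ hij q))
  have h2 : (∫⁻ q, ENNReal.ofReal (c.Φ q * pres c.γ (c.Vbar q)) ∂(μ.singularPart volume)) ≤
      ⨆ N, ∫⁻ q, ENNReal.ofReal (PA c N q) ∂(μ.singularPart volume) := by
    calc (∫⁻ q, ENNReal.ofReal (c.Φ q * pres c.γ (c.Vbar q)) ∂(μ.singularPart volume))
        ≤ ∫⁻ q, ⨆ N, ENNReal.ofReal (PA c N q) ∂(μ.singularPart volume) := by
          apply lintegral_mono fun q => ?_
          rw [← c.sup_PA q]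
          exact c.pw2 q
      _ = ⨆ N, ∫⁻ q, ENNReal.ofReal (PA c N q) ∂(μ.singularPart volume) :=
          lintegral_iSup (fun N => (PA_meas N).ennreal_ofReal)
            (fun i j hij q => ENNReal.ofReal_le_ofReal (PA_mono hij q))
  have hper : ∀ N M : ℕ,
      (∫⁻ q, ENNReal.ofReal (GA c μ N q)) +
        (∫⁻ q, ENNReal.ofReal (PA c M q) ∂(μ.singularPart volume)) ≤ ENNReal.ofReal C₀ := by
    intro N M
    have hN : (∫⁻ q, ENNReal.ofReal (GA c μ N q)) ≤
        (∫⁻ q, ENNReal.ofReal (GA c μ (max N M) q)) :=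
      lintegral_mono fun q => ENNReal.ofReal_le_ofReal (GA_mono μ (le_max_left _ _) q)
    have hM : (∫⁻ q, ENNReal.ofReal (PA c M q) ∂(μ.singularPart volume)) ≤
        (∫⁻ q, ENNReal.ofReal (PA c (max N M) q) ∂(μ.singularPart volume)) :=
      lintegral_mono fun q => ENNReal.ofReal_le_ofReal (PA_mono (le_max_right _ _) q)
    refine le_trans (add_le_add hN hM) ?_
    rw [← ofReal_integral_eq_lintegral_ofReal (GA_int μ (max N M))
        (Filter.Eventually.of_forall (GA_nonneg μ (max N M))),
      ← ofReal_integral_eq_lintegral_ofReal (PA_int _ (max N M))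
        (Filter.Eventually.of_forall (PA_nonneg (max N M))),
      ← ENNReal.ofReal_add (integral_nonneg (GA_nonneg μ (max N M)))
        (integral_nonneg (PA_nonneg (max N M)))]
    exact ENNReal.ofReal_le_ofReal (GA_bound μ hC₀ hstepA (max N M))
  refine le_trans (add_le_add h1 h2) ?_
  rw [ENNReal.iSup_add]
  apply iSup_le
  intro N
  rw [ENNReal.add_iSup]
  apply iSup_le
  intro M
  exact hper N M

end Ctx

end S15


/-- Weak lower semicontinuity of the relative entropy with respect to a moving step function. -/
theorem stmt15 (γ T vp vm C₀ : ℝ) (hγ : 1 < γ) (hT : 0 < T) (hvp : 0 < vp) (hvv : vp < vm)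
    (hC₀ : 0 < C₀)
    (X : ℝ → ℝ) (hX : BoundedVariationOn X (Set.Ioo 0 T))
    (Ω : Set (ℝ × ℝ)) (hΩ : Ω = {q : ℝ × ℝ | q.1 ∈ Set.Ioo 0 T ∧ q.2 < X q.1})
    (hfr : volume (frontier Ω) = 0)
    (vbar Vbar : ℝ × ℝ → ℝ)
    (hvbar : vbar = fun q => if q ∈ Ω then vm else vp)
    (hVbar : Vbar = fun q => if q ∈ closure Ω then vm else vp)
    (Φ : ℝ × ℝ → ℝ) (hΦc : Continuous Φ) (hΦs : HasCompactSupport Φ)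
    (hΦsupp : tsupport Φ ⊆ Set.Ioo 0 T ×ˢ (Set.univ : Set ℝ))
    (hΦnn : ∀ q, 0 ≤ Φ q)
    (vk : ℕ → Measure (ℝ × ℝ))
    (hvkfin : ∀ k, IsFiniteMeasureOnCompacts (vk k))
    (hbound : ∀ k,
      (∫⁻ q, ENNReal.ofReal (Φ q) * QrelE γ ((vk k).rnDeriv volume q) (vbar q)) +
      (∫⁻ q, ENNReal.ofReal (Φ q * pres γ (Vbar q)) ∂((vk k).singularPart volume))
        ≤ ENNReal.ofReal C₀)
    (vinf : Measure (ℝ × ℝ)) (hvinffin : IsFiniteMeasureOnCompacts vinf)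
    (hconv : ∀ ψ : ℝ × ℝ → ℝ, Continuous ψ → HasCompactSupport ψ →
      Filter.Tendsto (fun k => ∫ q, ψ q ∂(vk k)) Filter.atTop (nhds (∫ q, ψ q ∂vinf))) :
    (∫⁻ q, ENNReal.ofReal (Φ q) * QrelE γ (vinf.rnDeriv volume q) (vbar q)) +
    (∫⁻ q, ENNReal.ofReal (Φ q * pres γ (Vbar q)) ∂(vinf.singularPart volume))
      ≤ ENNReal.ofReal C₀ := by
  have hΩne : Ω.Nonempty := by
    refine ⟨(T/2, X (T/2) - 1), ?_⟩
    rw [hΩ]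
    exact ⟨⟨half_pos hT, half_lt_self hT⟩, by norm_num⟩
  have hΩcne : Ωᶜ.Nonempty := by
    refine ⟨(0, 0), ?_⟩
    rw [hΩ]
    intro hmem
    exact lt_irrefl (0:ℝ) hmem.1.1
  set c : S15.Ctx := ⟨γ, vm, vp, Φ, Ω, hγ, hvp, hvv, hΦc, hΦs, hΦnn, hΩne, hΩcne⟩ with hc
  have hvb : vbar = c.vbar := hvbar
  have hVb : Vbar = c.Vbar := hVbar
  have hstepA : ∀ P : S15.Pair, c.Adm P → (∫ q, P.1 q ∂vinf) + (∫ q, P.2 q) ≤ C₀ := by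
    intro P hP
    have hk : ∀ k, (∫ q, P.1 q ∂(vk k)) + (∫ q, P.2 q) ≤ C₀ := by
      intro k
      haveI := hvkfin k
      apply hP.value_le (vk k) hC₀
      have hb := hbound k
      rw [hvb, hVb] at hb
      exact hb
    have ht2 : Filter.Tendsto (fun k => (∫ q, P.1 q ∂(vk k)) + (∫ q, P.2 q))
        Filter.atTop (nhds ((∫ q, P.1 q ∂vinf) + (∫ q, P.2 q))) :=
      (hconv P.1 hP.1 hP.cs1).add tendsto_const_nhds
    exact le_of_tendsto ht2 (Filter.Eventually.of_forall hk)
  have hmain := S15.Ctx.main_bound (c := c) vinf hC₀ hfr hstepA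
  rw [hvb, hVb]
  exact hmain
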